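/- If finite simple graphs G and H are locally equivalent, then G is a Naji graph if and only if H is a Naji graph. -/

import Mathlib

/-- A Naji solution of the simple graph `G`: an assignment of `GF(2)` values to ordered
pairs of distinct vertices (encoded as a function `V → V → ZMod 2` vanishing on the
diagonal) satisfying Naji's equations (a), (b), (c). -/
def NajiSolution {V : Type*} (G : SimpleGraph V) (β : V → V → ZMod 2) : Prop :=
  (∀ v, β v v = 0) ∧
  (∀ v w, G.Adj v w → β v w + β w v = 1) ∧
  (∀ v w x : V, v ≠ w → v ≠ x → w ≠ x →
    G.Adj v w → ¬ G.Adj v x → ¬ G.Adj w x → β x v + β x w = 0) ∧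
  (∀ v w x : V, v ≠ w → v ≠ x → w ≠ x →
    G.Adj v w → G.Adj v x → ¬ G.Adj w x →
    β v w + β v x + β w x + β x w = 1)

/-- The local complement of `G` at `v`: the adjacency of every pair of neighbours of `v`
is reversed, all other adjacencies are unchanged. -/
def localComp {V : Type*} (G : SimpleGraph V) (v : V) : SimpleGraph V where
  Adj x y := x ≠ y ∧ Xor' (G.Adj x y) (G.Adj v x ∧ G.Adj v y)
  symm := by
    constructor
    rintro x y ⟨h1, h2⟩
    refine ⟨h1.symm, ?_⟩
    rwa [G.adj_comm y x, and_comm]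
  loopless := ⟨fun _ h => h.1 rfl⟩

/-- Two graphs are locally equivalent if one is obtained from the other by a sequence of
local complementations. -/
def LocallyEquivalent {V : Type*} (G H : SimpleGraph V) : Prop :=
  Relation.ReflTransGen (fun A B => ∃ v : V, B = localComp A v) G H

section Aux

variable {V : Type*}

open Classical in
/-- The transformed Naji assignment used for local complementation at `v`. -/
noncomputable def najiMap [DecidableEq V] (G : SimpleGraph V) (v : V)
    (β : V → V → ZMod 2) : V → V → ZMod 2 :=
  fun x y => if x = y then 0 else β x y + (if G.Adj v x then β v y else β v x)

lemma najiMap_pos [DecidableEq V] {G : SimpleGraph V} {v : V} {β : V → V → ZMod 2}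
    {x y : V} (hne : x ≠ y) (h : G.Adj v x) : najiMap G v β x y = β x y + β v y := by
  simp [najiMap, hne, h]

lemma najiMap_neg [DecidableEq V] {G : SimpleGraph V} {v : V} {β : V → V → ZMod 2}
    {x y : V} (hne : x ≠ y) (h : ¬ G.Adj v x) : najiMap G v β x y = β x y + β v x := by
  simp [najiMap, hne, h]

lemma adj_localComp {G : SimpleGraph V} {v x y : V} :
    (localComp G v).Adj x y ↔ x ≠ y ∧ Xor' (G.Adj x y) (G.Adj v x ∧ G.Adj v y) := Iff.rfl

lemma not_adj_localComp {G : SimpleGraph V} {v x y : V} (hxy : x ≠ y)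
    (h : ¬ (localComp G v).Adj x y) : G.Adj x y ↔ (G.Adj v x ∧ G.Adj v y) := by
  constructor
  · intro ha; by_contra hb; exact h ⟨hxy, Or.inl ⟨ha, hb⟩⟩
  · intro hb; by_contra ha; exact h ⟨hxy, Or.inr ⟨hb, ha⟩⟩

lemma localComp_localComp (G : SimpleGraph V) (v : V) :
    localComp (localComp G v) v = G := by
  ext x y
  have hv : ∀ z : V, (localComp G v).Adj v z ↔ G.Adj v z := by
    intro z
    rw [adj_localComp]
    constructor
    · rintro ⟨hne, h⟩
      rcases h with ⟨ha, -⟩ | ⟨⟨hvv, -⟩, -⟩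
      · exact ha
      · exact absurd hvv (G.loopless.irrefl v)
    · intro h
      exact ⟨h.ne, Or.inl ⟨h, fun hc => G.loopless.irrefl v hc.1⟩⟩
  rw [adj_localComp, hv, hv, adj_localComp]
  constructor
  · rintro ⟨hne, h⟩
    rcases h with ⟨⟨-, h⟩, hC⟩ | ⟨hC, h⟩
    · rcases h with ⟨ha, -⟩ | ⟨hc, -⟩
      · exact ha
      · exact absurd hc hC
    · by_contra hna
      exact h ⟨hne, Or.inr ⟨hC, hna⟩⟩
  · intro ha
    refine ⟨ha.ne, ?_⟩
    by_cases hC : (G.Adj v x ∧ G.Adj v y)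
    · refine Or.inr ⟨hC, ?_⟩
      rintro ⟨-, hx⟩
      rcases hx with ⟨-, hnc⟩ | ⟨-, hna⟩
      · exact hnc hC
      · exact hna ha
    · exact Or.inl ⟨⟨ha.ne, Or.inl ⟨ha, hC⟩⟩, hC⟩

lemma najiSolution_localComp [DecidableEq V] (G : SimpleGraph V) (v : V)
    (β : V → V → ZMod 2) (h : NajiSolution G β) :
    NajiSolution (localComp G v) (najiMap G v β) := by
  obtain ⟨h0, ha, hb, hc⟩ := h
  have two : ∀ z : ZMod 2, z + z = 0 := by decide
  have h2 : (2 : ZMod 2) = 0 := by decide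
  refine ⟨fun x => by simp [najiMap], ?_, ?_, ?_⟩
  · -- equation (a)
    intro x y hadj
    rw [adj_localComp] at hadj
    obtain ⟨hne, hx⟩ := hadj
    by_cases hvx : G.Adj v x <;> by_cases hvy : G.Adj v y
    · rcases hx with ⟨-, hno⟩ | ⟨-, hnxy⟩
      · exact absurd ⟨hvx, hvy⟩ hno
      · rw [najiMap_pos hne hvx, najiMap_pos hne.symm hvy]
        linear_combination hc v x y hvx.ne hvy.ne hne hvx hvy hnxy
    · rcases hx with ⟨hxy, -⟩ | ⟨⟨-, hvy'⟩, -⟩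
      · rw [najiMap_pos hne hvx, najiMap_neg hne.symm hvy]
        linear_combination ha x y hxy + two (β v y)
      · exact absurd hvy' hvy
    · rcases hx with ⟨hxy, -⟩ | ⟨⟨hvx', -⟩, -⟩
      · rw [najiMap_neg hne hvx, najiMap_pos hne.symm hvy]
        linear_combination ha x y hxy + two (β v x)
      · exact absurd hvx' hvx
    · rcases hx with ⟨hxy, -⟩ | ⟨⟨hvx', -⟩, -⟩
      · rw [najiMap_neg hne hvx, najiMap_neg hne.symm hvy]
        have hxv : x ≠ v := by rintro rfl; exact hvy hxy
        have hyv : y ≠ v := by rintro rfl; exact hvx hxy.symm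
        have hbinst : β v x + β v y = 0 :=
          hb x y v hne hxv hyv hxy (fun h' => hvx h'.symm) (fun h' => hvy h'.symm)
        linear_combination ha x y hxy + hbinst
      · exact absurd hvx' hvx
  · -- equation (b)
    intro a b c hab hac hbc Hab Hnac Hnbc
    rw [adj_localComp] at Hab
    obtain ⟨-, xab⟩ := Hab
    have eac := not_adj_localComp hac Hnac
    have ebc := not_adj_localComp hbc Hnbc
    by_cases hvc : G.Adj v c
    · rw [najiMap_pos hac.symm hvc, najiMap_pos hbc.symm hvc]
      by_cases hva : G.Adj v a <;> by_cases hvb : G.Adj v b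
      · -- TT
        have gac : G.Adj a c := eac.mpr ⟨hva, hvc⟩
        have gbc : G.Adj b c := ebc.mpr ⟨hvb, hvc⟩
        rcases xab with ⟨-, hno⟩ | ⟨-, gnab⟩
        · exact absurd ⟨hva, hvb⟩ hno
        · have E1 := hc c a b hac.symm hbc.symm hab gac.symm gbc.symm gnab
          have E2 := hc v a b hva.ne hvb.ne hab hva hvb gnab
          linear_combination E1 + E2 - two (β a b) - two (β b a) + h2
      · -- TF
        have gac : G.Adj a c := eac.mpr ⟨hva, hvc⟩
        have gnbc : ¬ G.Adj b c := fun h' => hvb (ebc.mp h').1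
        rcases xab with ⟨gab, -⟩ | ⟨⟨-, hvb'⟩, -⟩
        · have hvbne : v ≠ b := by rintro rfl; exact gnbc hvc
          have E1 := hb c v b hvc.ne' hbc.symm hvbne hvc.symm
            (fun h' => gnbc h'.symm) hvb
          have E2 := hc a b v hab hva.ne' hvbne.symm gab hva.symm
            (fun h' => hvb h'.symm)
          have E3 := hc a b c hab hac hbc gab gac gnbc
          have E4 := ha v a hva
          have E5 := ha a c gac
          linear_combination E1 + E2 + E3 + E4 + E5 - two (β b c) - two (β b v) -
            two (β a b) - two (β a v) - two (β a c) + h2 + h2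
        · exact absurd hvb' hvb
      · -- FT
        have gnac : ¬ G.Adj a c := fun h' => hva (eac.mp h').1
        have gbc : G.Adj b c := ebc.mpr ⟨hvb, hvc⟩
        rcases xab with ⟨gab, -⟩ | ⟨⟨hva', -⟩, -⟩
        · have hvane : v ≠ a := by rintro rfl; exact gnac hvc
          have E1 := hb c v a hvc.ne' hac.symm hvane hvc.symm
            (fun h' => gnac h'.symm) hva
          have E2 := hc b a v hab.symm hvb.ne' hvane.symm gab.symm hvb.symm
            (fun h' => hva h'.symm)
          have E3 := hc b a c hab.symm hbc hac gab.symm gbc gnac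
          have E4 := ha v b hvb
          have E5 := ha b c gbc
          linear_combination E1 + E2 + E3 + E4 + E5 - two (β a c) - two (β a v) -
            two (β b a) - two (β b v) - two (β b c) + h2 + h2
        · exact absurd hva' hva
      · -- FF
        have gnac : ¬ G.Adj a c := fun h' => hva (eac.mp h').1
        have gnbc : ¬ G.Adj b c := fun h' => hvb (ebc.mp h').1
        rcases xab with ⟨gab, -⟩ | ⟨⟨hva', -⟩, -⟩
        · have hvane : a ≠ v := by rintro rfl; exact gnac hvc
          have hvbne : b ≠ v := by rintro rfl; exact gnbc hvc
          have E1 := hb a b v hab hvane hvbne gab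
            (fun h' => hva h'.symm) (fun h' => hvb h'.symm)
          have E2 := hb a b c hab hac hbc gab gnac gnbc
          linear_combination E1 + E2
        · exact absurd hva' hva
    · rw [najiMap_neg hac.symm hvc, najiMap_neg hbc.symm hvc]
      have gnac : ¬ G.Adj a c := fun h' => hvc (eac.mp h').2
      have gnbc : ¬ G.Adj b c := fun h' => hvc (ebc.mp h').2
      rcases xab with ⟨gab, -⟩ | ⟨⟨hva, hvb⟩, gnab⟩
      · have E1 := hb a b c hab hac hbc gab gnac gnbc
        linear_combination E1 + two (β v c)
      · have hvcne : v ≠ c := by rintro rfl; exact gnac hva.symm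
        have E1 := hb v a c hva.ne hvcne hac hva hvc gnac
        have E2 := hb v b c hvb.ne hvcne hbc hvb hvc gnbc
        linear_combination E1 + E2 + two (β v c) - two (β c v)
  · -- equation (c)
    intro a b c hab hac hbc Hab Hac Hnbc
    rw [adj_localComp] at Hab Hac
    obtain ⟨-, xab⟩ := Hab
    obtain ⟨-, xac⟩ := Hac
    have ebc := not_adj_localComp hbc Hnbc
    by_cases hva : G.Adj v a <;> by_cases hvb : G.Adj v b <;> by_cases hvc : G.Adj v c
    · -- TTT
      rcases xab with ⟨-, hno⟩ | ⟨-, gnab⟩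
      · exact absurd ⟨hva, hvb⟩ hno
      rcases xac with ⟨-, hno⟩ | ⟨-, gnac⟩
      · exact absurd ⟨hva, hvc⟩ hno
      have gbc : G.Adj b c := ebc.mpr ⟨hvb, hvc⟩
      rw [najiMap_pos hab hva, najiMap_pos hac hva, najiMap_pos hbc hvb,
        najiMap_pos hbc.symm hvc]
      have E1 := ha b c gbc
      have E2 := hb b c a hbc hab.symm hac.symm gbc
        (fun h' => gnab h'.symm) (fun h' => gnac h'.symm)
      linear_combination E1 + E2 + two (β v b) + two (β v c)
    · -- TTF
      rcases xab with ⟨-, hno⟩ | ⟨-, gnab⟩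
      · exact absurd ⟨hva, hvb⟩ hno
      rcases xac with ⟨gac, -⟩ | ⟨⟨-, hvc'⟩, -⟩
      swap
      · exact absurd hvc' hvc
      have gnbc : ¬ G.Adj b c := fun h' => hvc (ebc.mp h').2
      have hvcne : v ≠ c := by rintro rfl; exact gnbc hvb.symm
      rw [najiMap_pos hab hva, najiMap_pos hac hva, najiMap_pos hbc hvb,
        najiMap_neg hbc.symm hvc]
      have E1 := hc v a b hva.ne hvb.ne hab hva hvb gnab
      have E2 := hc a v c hva.ne' hac hvcne hva.symm gac hvc
      have E3 := hb v b c hvb.ne hvcne hbc hvb hvc gnbc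
      have E4 := hb a c b hac hab hbc.symm gac gnab (fun h' => gnbc h'.symm)
      have E5 := ha v a hva
      linear_combination E1 + E2 + E3 + E4 + E5 + two (β v c) - two (β v a) -
        two (β b a) - two (β a v) - two (β c v) + h2
    · -- TFT
      rcases xab with ⟨gab, -⟩ | ⟨⟨-, hvb'⟩, -⟩
      swap
      · exact absurd hvb' hvb
      rcases xac with ⟨-, hno⟩ | ⟨-, gnac⟩
      · exact absurd ⟨hva, hvc⟩ hno
      have gnbc : ¬ G.Adj b c := fun h' => hvb (ebc.mp h').1
      have hvbne : v ≠ b := by rintro rfl; exact gnbc hvc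
      rw [najiMap_pos hab hva, najiMap_pos hac hva, najiMap_neg hbc hvb,
        najiMap_pos hbc.symm hvc]
      have E1 := hc v a c hva.ne hvc.ne hac hva hvc gnac
      have E2 := hc a v b hva.ne' hab hvbne hva.symm gab hvb
      have E3 := hb a b c hab hac hbc gab gnac gnbc
      have E4 := hb v c b hvc.ne hvbne hbc.symm hvc hvb (fun h' => gnbc h'.symm)
      have E5 := ha v a hva
      linear_combination E1 + E2 + E3 + E4 + E5 + two (β v b) - two (β v a) -
        two (β c a) - two (β a v) - two (β b v) + h2
    · -- TFF
      rcases xab with ⟨gab, -⟩ | ⟨⟨-, hvb'⟩, -⟩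
      swap
      · exact absurd hvb' hvb
      rcases xac with ⟨gac, -⟩ | ⟨⟨-, hvc'⟩, -⟩
      swap
      · exact absurd hvc' hvc
      have gnbc : ¬ G.Adj b c := fun h' => hvb (ebc.mp h').1
      rw [najiMap_pos hab hva, najiMap_pos hac hva, najiMap_neg hbc hvb,
        najiMap_neg hbc.symm hvc]
      have E0 := hc a b c hab hac hbc gab gac gnbc
      linear_combination E0 + two (β v b) + two (β v c)
    · -- FTT
      rcases xab with ⟨gab, -⟩ | ⟨⟨hva', -⟩, -⟩
      swap
      · exact absurd hva' hva
      rcases xac with ⟨gac, -⟩ | ⟨⟨hva', -⟩, -⟩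
      swap
      · exact absurd hva' hva
      have gbc : G.Adj b c := ebc.mpr ⟨hvb, hvc⟩
      rw [najiMap_pos hbc hvb, najiMap_pos hbc.symm hvc]
      by_cases hav : a = v
      · subst hav
        rw [najiMap_neg hab hva, najiMap_neg hac hva]
        have E1 := ha b c gbc
        linear_combination E1 + two (β a b) + two (β a a) + two (β a c)
      · rw [najiMap_neg hab hva, najiMap_neg hac hva]
        have E1 := ha b c gbc
        have E2 := hc b a v hab.symm hvb.ne' hav gab.symm hvb.symm
          (fun h' => hva h'.symm)
        have E3 := hc c a v hac.symm hvc.ne' hav gac.symm hvc.symm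
          (fun h' => hva h'.symm)
        have E4 := ha a b gab
        have E5 := ha a c gac
        have E6 := ha v b hvb
        have E7 := ha v c hvc
        linear_combination E1 + E2 + E3 + E4 + E5 + E6 + E7 - two (β b a) -
          two (β b v) - two (β a v) - two (β c a) - two (β c v) + h2 + h2 + h2
    · -- FTF
      rcases xab with ⟨gab, -⟩ | ⟨⟨hva', -⟩, -⟩
      swap
      · exact absurd hva' hva
      rcases xac with ⟨gac, -⟩ | ⟨⟨hva', -⟩, -⟩
      swap
      · exact absurd hva' hva
      have gnbc : ¬ G.Adj b c := fun h' => hvc (ebc.mp h').2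
      rw [najiMap_neg hab hva, najiMap_neg hac hva, najiMap_pos hbc hvb,
        najiMap_neg hbc.symm hvc]
      have E0 := hc a b c hab hac hbc gab gac gnbc
      linear_combination E0 + two (β v a) + two (β v c)
    · -- FFT
      rcases xab with ⟨gab, -⟩ | ⟨⟨hva', -⟩, -⟩
      swap
      · exact absurd hva' hva
      rcases xac with ⟨gac, -⟩ | ⟨⟨hva', -⟩, -⟩
      swap
      · exact absurd hva' hva
      have gnbc : ¬ G.Adj b c := fun h' => hvb (ebc.mp h').1
      rw [najiMap_neg hab hva, najiMap_neg hac hva, najiMap_neg hbc hvb,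
        najiMap_pos hbc.symm hvc]
      have E0 := hc a b c hab hac hbc gab gac gnbc
      linear_combination E0 + two (β v a) + two (β v b)
    · -- FFF
      rcases xab with ⟨gab, -⟩ | ⟨⟨hva', -⟩, -⟩
      swap
      · exact absurd hva' hva
      rcases xac with ⟨gac, -⟩ | ⟨⟨hva', -⟩, -⟩
      swap
      · exact absurd hva' hva
      have gnbc : ¬ G.Adj b c := fun h' => hvb (ebc.mp h').1
      rw [najiMap_neg hab hva, najiMap_neg hac hva, najiMap_neg hbc hvb,
        najiMap_neg hbc.symm hvc]
      have hane : a ≠ v := by rintro rfl; exact hvb gab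
      have hbne : b ≠ v := by rintro rfl; exact hva gab.symm
      have hcne : c ≠ v := by rintro rfl; exact hva gac.symm
      have E0 := hc a b c hab hac hbc gab gac gnbc
      have E1 := hb a b v hab hane hbne gab
        (fun h' => hva h'.symm) (fun h' => hvb h'.symm)
      have E2 := hb a c v hac hane hcne gac
        (fun h' => hva h'.symm) (fun h' => hvc h'.symm)
      linear_combination E0 + E1 + E2

lemma exists_naji_localComp [DecidableEq V] (G : SimpleGraph V) (v : V)
    (h : ∃ β : V → V → ZMod 2, NajiSolution G β) :
    ∃ β : V → V → ZMod 2, NajiSolution (localComp G v) β := by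
  obtain ⟨β, hβ⟩ := h
  exact ⟨najiMap G v β, najiSolution_localComp G v β hβ⟩

end Aux

/-- Locally equivalent graphs are simultaneously Naji graphs. -/
theorem naji_locally_equivalent {V : Type*} [Fintype V] [DecidableEq V]
    (G H : SimpleGraph V) (h : LocallyEquivalent G H) :
    (∃ β : V → V → ZMod 2, NajiSolution G β) ↔ (∃ β : V → V → ZMod 2, NajiSolution H β) := by
  induction h with
  | refl => rfl
  | tail hsteps hstep ih =>
    obtain ⟨v, rfl⟩ := hstep
    rw [ih]
    constructor
    · intro h'
      exact exists_naji_localComp _ v h'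
    · intro h'
      have := exists_naji_localComp _ v h'
      rwa [localComp_localComp] at this
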